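/- Let 0 < γ ≤ 1 and 0 < μ < 1 be real numbers and β ≥ 1 an integer, and set a = μ² + γμ. If Δ_W1(β,γ,μ) ≤ Δ_ZW1(γ,μ), then β ≤ (2γ − a + √((a − 2γ)² + 8a)) / (2a), where Δ_ZW1(γ,μ) = 2/μ + μ/(γ(μ+γ)) − 1 and Δ_W1(β,γ,μ) = (βμ(−βγ + γ − 2) − 2(βγ + 1)) / (2(γ((1−μ)^β + βμ) + μ)) + β + 1/γ + 2/μ − 1. In particular, the AoI-optimal threshold β* for the Wait-1 policy satisfies β* ≤ ⌊(2γ + √((μ² + γμ − 2γ)² + 8(μ² + γμ)))/(2(μ² + γμ)) − 1/2⌋. -/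

import Mathlib

/-- Lemma 6: if `Δ_W1(β) ≤ Δ_ZW1`, then `β ≤ (2γ − a + √((a−2γ)² + 8a))/(2a)`
with `a = μ² + γμ`; in particular the AoI-optimal threshold `β*` satisfies
`β* ≤ ⌊(2γ + √((μ²+γμ−2γ)² + 8(μ²+γμ)))/(2(μ²+γμ)) − 1/2⌋`. -/
theorem wait1_optimal_threshold_bound
    (γ μ : ℝ) (hγ0 : 0 < γ) (hγ1 : γ ≤ 1) (hμ0 : 0 < μ) (hμ1 : μ < 1)
    (a : ℝ) (ha : a = μ ^ 2 + γ * μ)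
    (ΔW1 : ℕ → ℝ)
    (hΔW1 : ∀ β : ℕ, ΔW1 β
      = ((β : ℝ) * μ * (-(β : ℝ) * γ + γ - 2) - 2 * ((β : ℝ) * γ + 1))
          / (2 * (γ * ((1 - μ) ^ β + (β : ℝ) * μ) + μ))
        + (β : ℝ) + 1 / γ + 2 / μ - 1)
    (ΔZW1 : ℝ) (hΔZW1 : ΔZW1 = 2 / μ + μ / (γ * (μ + γ)) - 1) :
    (∀ β : ℕ, 1 ≤ β → ΔW1 β ≤ ΔZW1 →
      (β : ℝ) ≤ (2 * γ - a + Real.sqrt ((a - 2 * γ) ^ 2 + 8 * a)) / (2 * a))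
    ∧ (∀ βstar : ℕ, 1 ≤ βstar → (∀ β' : ℕ, 1 ≤ β' → ΔW1 βstar ≤ ΔW1 β') →
      (βstar : ℤ) ≤ ⌊(2 * γ + Real.sqrt ((μ ^ 2 + γ * μ - 2 * γ) ^ 2
          + 8 * (μ ^ 2 + γ * μ))) / (2 * (μ ^ 2 + γ * μ)) - 1 / 2⌋) := by
  have hγμ : 0 < μ + γ := by linarith
  have ha0 : 0 < a := by rw [ha]; nlinarith
  have main : ∀ β : ℕ, 1 ≤ β → ΔW1 β ≤ ΔZW1 →
      (β : ℝ) ≤ (2 * γ - a + Real.sqrt ((a - 2 * γ) ^ 2 + 8 * a)) / (2 * a) := by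
    intro β hβ h
    set b : ℝ := (β : ℝ) with hbdef
    have hb1 : (1:ℝ) ≤ b := by rw [hbdef]; exact_mod_cast hβ
    have hb0 : (0:ℝ) ≤ b := by linarith
    have hE : 0 ≤ (1 - μ) ^ β := pow_nonneg (by linarith) β
    set E : ℝ := (1 - μ) ^ β with hEdef
    set N : ℝ := b * μ * (-b * γ + γ - 2) - 2 * (b * γ + 1) with hNdef
    set D : ℝ := 2 * (γ * (E + b * μ) + μ) with hDdef
    have hD : 0 < D := by
      have h1 : 0 ≤ γ * (E + b * μ) :=
        mul_nonneg hγ0.le (add_nonneg hE (mul_nonneg hb0 hμ0.le))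
      rw [hDdef]; linarith
    rw [hΔW1, hΔZW1] at h
    have hfact : μ / (γ * (μ + γ)) = 1 / γ - 1 / (μ + γ) := by
      field_simp
      ring
    have h2 : N / D ≤ -(1 / (μ + γ)) - b := by
      rw [hfact] at h
      linarith [h]
    have h3 : N ≤ (-(1 / (μ + γ)) - b) * D := (div_le_iff₀ hD).mp h2
    have key : (μ + γ) * N + D + (μ + γ) * (b * D) ≤ 0 := by
      have h4 := mul_le_mul_of_nonneg_left h3 hγμ.le
      have h5 : (μ + γ) * ((-(1 / (μ + γ)) - b) * D) = -D - (μ + γ) * (b * D) := by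
        field_simp
      rw [h5] at h4
      linarith
    have hγquad : γ * (a * b ^ 2 + (a - 2 * γ) * b - 2) ≤ 0 := by
      have hEterm : 0 ≤ γ * E := mul_nonneg hγ0.le hE
      have hEterm2 : 0 ≤ γ * E * b * (μ + γ) :=
        mul_nonneg (mul_nonneg hEterm hb0) hγμ.le
      rw [ha]
      rw [hNdef, hDdef] at key
      nlinarith [key, hEterm, hEterm2]
    have hquad : a * b ^ 2 + (a - 2 * γ) * b - 2 ≤ 0 := by
      nlinarith [hγquad, hγ0]
    set s : ℝ := Real.sqrt ((a - 2 * γ) ^ 2 + 8 * a) with hsdef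
    have hs0 : 0 ≤ s := Real.sqrt_nonneg _
    have hs2 : s ^ 2 = (a - 2 * γ) ^ 2 + 8 * a := by
      rw [hsdef, Real.sq_sqrt]; positivity
    rw [le_div_iff₀ (by positivity)]
    have hid : (2 * a * b + a - 2 * γ) ^ 2
        = (a - 2 * γ) ^ 2 + 8 * a + 4 * a * (a * b ^ 2 + (a - 2 * γ) * b - 2) := by
      ring
    have hT2 : (2 * a * b + a - 2 * γ) ^ 2 ≤ s ^ 2 := by
      rw [hs2, hid]
      have := mul_nonpos_of_nonneg_of_nonpos ha0.le hquad
      linarith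
    have h6 : |2 * a * b + a - 2 * γ| ≤ s := by
      have h7 := Real.sqrt_le_sqrt hT2
      rw [Real.sqrt_sq_eq_abs, Real.sqrt_sq_eq_abs, abs_of_nonneg hs0] at h7
      exact h7
    have h8 := le_abs_self (2 * a * b + a - 2 * γ)
    linarith
  refine ⟨main, ?_⟩
  intro βstar h1 hopt
  have hZW : ΔW1 1 = ΔZW1 := by
    rw [hΔW1, hΔZW1]
    norm_num
    field_simp
    ring
  have h := main βstar h1 (by rw [← hZW]; exact hopt 1 le_rfl)
  rw [Int.le_floor]
  push_cast
  have heq : (2 * γ + Real.sqrt ((μ ^ 2 + γ * μ - 2 * γ) ^ 2 + 8 * (μ ^ 2 + γ * μ)))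
      / (2 * (μ ^ 2 + γ * μ)) - 1 / 2
      = (2 * γ - a + Real.sqrt ((a - 2 * γ) ^ 2 + 8 * a)) / (2 * a) := by
    rw [ha]
    field_simp
    ring
  rw [heq]
  exact h
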